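/- If a bilevel LP with rational data (leader constraints A₁₁ x₁ + A₁₂ x₂ ≥ b₁, follower solving min { c₂₂ᵀ x₂ : A₂₁ x₁ + A₂₂ x₂ ≥ b₂ }) has a feasible point, then it has a rational feasible point. -/

import Mathlib

open Matrix Finset

section BilevelAux

variable {F : Type} [Field F] [LinearOrder F] [IsStrictOrderedRing F]

private lemma mv_apply {p r : ℕ} (A : Matrix (Fin p) (Fin r) ℚ) (v : Fin r → ℝ) (i : Fin p) :
    ((A.map ((↑·) : ℚ → ℝ)).mulVec v) i = ∑ j, (A i j : ℝ) * v j := by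
  simp [Matrix.mulVec, dotProduct, Matrix.map_apply]


variable {F : Type} [Field F] [LinearOrder F] [IsStrictOrderedRing F]

theorem gale_alternative : ∀ (n : ℕ) {ι : Type} [Fintype ι]
    (A : Matrix ι (Fin n) F) (b : ι → F),
    (¬ ∃ x : Fin n → F, b ≤ A.mulVec x) →
    ∃ y : ι → F, 0 ≤ y ∧ A.vecMul y = 0 ∧ 0 < y ⬝ᵥ b := by
  intro n
  induction n with
  | zero =>
    intro ι _ A b hinf
    haveI := Classical.decEq ι
    have h0 : ¬ b ≤ A.mulVec 0 := fun h => hinf ⟨0, h⟩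
    rw [Pi.le_def] at h0
    push_neg at h0
    obtain ⟨i, hi⟩ := h0
    have hmv : (A.mulVec 0) i = 0 := by
      simp [Matrix.mulVec, dotProduct]
    refine ⟨fun k => if k = i then 1 else 0, ?_, ?_, ?_⟩
    · intro k; dsimp; split <;> norm_num
    · funext j; exact j.elim0
    · simp only [dotProduct, ite_mul, one_mul, zero_mul]
      rw [Finset.sum_ite_eq' Finset.univ i b]
      simp only [Finset.mem_univ, if_true]
      rw [hmv] at hi; linarith
  | succ n ih =>
    intro ι _ A b hinf
    haveI := Classical.decEq ι
    set a : ι → F := fun i => A i 0 with ha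
    set Y : ((ι × ι) ⊕ ι) → ι → F := fun r =>
      Sum.elim
        (fun p k => if 0 < a p.1 ∧ a p.2 < 0 then
            (if k = p.1 then (a p.1)⁻¹ else 0) + (if k = p.2 then -(a p.2)⁻¹ else 0)
          else 0)
        (fun i k => if a i = 0 ∧ k = i then 1 else 0) r with hY
    have hYnn : ∀ r, 0 ≤ Y r := by
      rintro (⟨i, j⟩ | i) k
      · dsimp [Y]
        split
        · rename_i h
          refine add_nonneg ?_ ?_ <;> split
          · exact le_of_lt (inv_pos.2 h.1)
          · exact le_rfl
          · exact le_of_lt (neg_pos.2 (inv_lt_zero.2 h.2))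
          · exact le_rfl
        · exact le_rfl
      · dsimp [Y]; split
        · exact zero_le_one
        · exact le_rfl
    have hdelta : ∀ (c : F) (i : ι) (m : Fin (n+1)),
        (Matrix.vecMul (fun k => if k = i then c else 0) A) m = c * A i m := by
      intro c i m
      simp only [Matrix.vecMul, dotProduct, ite_mul, zero_mul]
      rw [Finset.sum_ite_eq' Finset.univ i (fun k => c * A k m)]
      simp
    -- unfolded vecMul for each generator
    have hvmP : ∀ (i j : ι), (0 < a i ∧ a j < 0) → ∀ m : Fin (n+1),
        (Matrix.vecMul (Y (Sum.inl (i, j))) A) m = (a i)⁻¹ * A i m + (-(a j)⁻¹) * A j m := by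
      intro i j h m
      have hfun : Y (Sum.inl (i, j)) =
          (fun k => if k = i then (a i)⁻¹ else 0) + (fun k => if k = j then -(a j)⁻¹ else 0) := by
        funext k; dsimp [Y]; rw [if_pos h]
      rw [hfun, Matrix.add_vecMul, Pi.add_apply, hdelta, hdelta]
    have hvmP' : ∀ (i j : ι), ¬(0 < a i ∧ a j < 0) →
        Matrix.vecMul (Y (Sum.inl (i, j))) A = 0 := by
      intro i j h
      have hfun : Y (Sum.inl (i, j)) = 0 := by
        funext k; dsimp [Y]; rw [if_neg h]
      rw [hfun, Matrix.zero_vecMul]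
    have hvmZ : ∀ (i : ι), a i = 0 → ∀ m : Fin (n+1),
        (Matrix.vecMul (Y (Sum.inr i)) A) m = A i m := by
      intro i h m
      have hfun : Y (Sum.inr i) = (fun k => if k = i then (1:F) else 0) := by
        funext k; dsimp [Y]; simp [h]
      rw [hfun, hdelta, one_mul]
    have hvmZ' : ∀ (i : ι), ¬(a i = 0) → Matrix.vecMul (Y (Sum.inr i)) A = 0 := by
      intro i h
      have hfun : Y (Sum.inr i) = 0 := by
        funext k; dsimp [Y]; simp [h]
      rw [hfun, Matrix.zero_vecMul]
    have hY0 : ∀ r, (Matrix.vecMul (Y r) A) 0 = 0 := by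
      rintro (⟨i, j⟩ | i)
      · by_cases h : 0 < a i ∧ a j < 0
        · rw [hvmP i j h 0]
          show (a i)⁻¹ * a i + (-(a j)⁻¹) * a j = 0
          rw [neg_mul, inv_mul_cancel₀ (ne_of_gt h.1), inv_mul_cancel₀ (ne_of_lt h.2)]
          norm_num
        · rw [hvmP' i j h]; rfl
      · by_cases h : a i = 0
        · rw [hvmZ i h 0]; exact h
        · rw [hvmZ' i h]; rfl
    set A' : Matrix ((ι × ι) ⊕ ι) (Fin n) F := fun r j => (Matrix.vecMul (Y r) A) j.succ with hA'
    set b' : ((ι × ι) ⊕ ι) → F := fun r => Y r ⬝ᵥ b with hb'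
    -- dot products with generators
    have hdotP : ∀ (i j : ι), (0 < a i ∧ a j < 0) → ∀ v : ι → F,
        (Y (Sum.inl (i,j)) ⬝ᵥ v) = (a i)⁻¹ * v i + (-(a j)⁻¹) * v j := by
      intro i j hij v
      have hYij : ∀ k, Y (Sum.inl (i, j)) k =
          (if k = i then (a i)⁻¹ else 0) + (if k = j then -(a j)⁻¹ else 0) := by
        intro k; dsimp [Y]; rw [if_pos hij]
      simp only [dotProduct, hYij, add_mul, ite_mul, zero_mul]
      rw [Finset.sum_add_distrib]
      rw [Finset.sum_ite_eq' Finset.univ i (fun k => (a i)⁻¹ * v k)]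
      rw [Finset.sum_ite_eq' Finset.univ j (fun k => -(a j)⁻¹ * v k)]
      simp
    have hdotZ : ∀ (i : ι), a i = 0 → ∀ v : ι → F, (Y (Sum.inr i) ⬝ᵥ v) = v i := by
      intro i h v
      have hfun : ∀ k, Y (Sum.inr i) k = if k = i then (1:F) else 0 := by
        intro k; dsimp [Y]; simp [h]
      simp only [dotProduct, hfun, ite_mul, one_mul, zero_mul]
      rw [Finset.sum_ite_eq' Finset.univ i v]
      simp
    -- completeness of the reduced system
    have hcomp : ∀ x' : Fin n → F, b' ≤ A'.mulVec x' → ∃ x₀ : F, b ≤ A.mulVec (Fin.cons x₀ x') := by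
      intro x' hx'
      set Rx : ι → F := fun i => ∑ j : Fin n, A i j.succ * x' j with hRx
      have hred : ∀ r : (ι × ι) ⊕ ι, b' r ≤ Y r ⬝ᵥ Rx := by
        intro r
        have h1 := hx' r
        calc b' r ≤ (A'.mulVec x') r := h1
          _ = ∑ j : Fin n, (∑ k : ι, Y r k * A k j.succ) * x' j := by
                simp [hA', Matrix.mulVec, dotProduct, Matrix.vecMul]
          _ = Y r ⬝ᵥ Rx := by
                simp only [dotProduct, hRx, Finset.mul_sum, Finset.sum_mul]
                rw [Finset.sum_comm]
                congr 1; funext k; congr 1; funext j; ring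
      set L : ι → F := fun i => (b i - Rx i) / a i with hL
      set S : Finset ι := Finset.univ.filter (fun i => 0 < a i) with hS
      set T : Finset ι := Finset.univ.filter (fun i => a i < 0) with hT
      have hpair : ∀ i ∈ S, ∀ j ∈ T, L i ≤ L j := by
        intro i hi j hj
        rw [hS, Finset.mem_filter] at hi
        rw [hT, Finset.mem_filter] at hj
        have hij : 0 < a i ∧ a j < 0 := ⟨hi.2, hj.2⟩
        have h1 : (a i)⁻¹ * b i + (-(a j)⁻¹) * b j ≤ (a i)⁻¹ * Rx i + (-(a j)⁻¹) * Rx j := by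
          calc (a i)⁻¹ * b i + (-(a j)⁻¹) * b j = Y (Sum.inl (i,j)) ⬝ᵥ b := (hdotP i j hij b).symm
            _ ≤ Y (Sum.inl (i,j)) ⬝ᵥ Rx := hred (Sum.inl (i,j))
            _ = (a i)⁻¹ * Rx i + (-(a j)⁻¹) * Rx j := hdotP i j hij Rx
        rw [hL]
        have e1 : (b i - Rx i) / a i = (a i)⁻¹ * (b i - Rx i) := by rw [div_eq_inv_mul]
        have e2 : (b j - Rx j) / a j = (a j)⁻¹ * (b j - Rx j) := by rw [div_eq_inv_mul]
        dsimp only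
        rw [e1, e2]
        nlinarith [h1]
      obtain ⟨x₀, hxS, hxT⟩ : ∃ x₀ : F, (∀ i ∈ S, L i ≤ x₀) ∧ (∀ j ∈ T, x₀ ≤ L j) := by
        by_cases hSne : S.Nonempty
        · refine ⟨S.sup' hSne L, fun i hi => Finset.le_sup' L hi, fun j hj => ?_⟩
          obtain ⟨i, hi, hEq⟩ := Finset.exists_mem_eq_sup' hSne L
          rw [hEq]; exact hpair i hi j hj
        · by_cases hTne : T.Nonempty
          · exact ⟨T.inf' hTne L, fun i hi => absurd ⟨i, hi⟩ hSne, fun j hj => Finset.inf'_le L hj⟩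
          · exact ⟨0, fun i hi => absurd ⟨i, hi⟩ hSne, fun j hj => absurd ⟨j, hj⟩ hTne⟩
      refine ⟨x₀, fun i => ?_⟩
      have hmv : (A.mulVec (Fin.cons x₀ x')) i = a i * x₀ + Rx i := by
        simp only [Matrix.mulVec, dotProduct]
        rw [Fin.sum_univ_succ]
        simp [hRx, ha, Fin.cons_zero, Fin.cons_succ]
      rw [hmv]
      rcases lt_trichotomy (a i) 0 with hneg | hzero | hpos
      · have hiT : i ∈ T := by rw [hT, Finset.mem_filter]; exact ⟨Finset.mem_univ i, hneg⟩
        have := hxT i hiT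
        rw [hL] at this
        dsimp only at this
        rw [le_div_iff_of_neg hneg] at this
        linarith
      · have h1 := hred (Sum.inr i)
        have hb2 : b' (Sum.inr i) = b i := hdotZ i hzero b
        rw [hb2, hdotZ i hzero Rx] at h1
        rw [hzero]; linarith
      · have hiS : i ∈ S := by rw [hS, Finset.mem_filter]; exact ⟨Finset.mem_univ i, hpos⟩
        have := hxS i hiS
        rw [hL] at this
        dsimp only at this
        rw [div_le_iff₀ hpos] at this
        linarith
    -- the reduced system is infeasible
    have hinf' : ¬ ∃ x' : Fin n → F, b' ≤ A'.mulVec x' := by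
      rintro ⟨x', hx'⟩
      obtain ⟨x₀, hfeas⟩ := hcomp x' hx'
      exact hinf ⟨Fin.cons x₀ x', hfeas⟩
    obtain ⟨w, hwnn, hwvm, hwb⟩ := ih A' b' hinf'
    refine ⟨fun k => ∑ r, w r * Y r k, ?_, ?_, ?_⟩
    · intro k
      exact Finset.sum_nonneg fun r _ => mul_nonneg (hwnn r) (hYnn r k)
    · funext m
      have hswap : (Matrix.vecMul (fun k => ∑ r, w r * Y r k) A) m
          = ∑ r, w r * (Matrix.vecMul (Y r) A) m := by
        simp only [Matrix.vecMul, dotProduct, Finset.sum_mul]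
        rw [Finset.sum_comm]
        congr 1; funext r; rw [Finset.mul_sum]; congr 1; funext k; ring
      rw [Pi.zero_apply, hswap]
      refine Fin.cases ?_ ?_ m
      · rw [Finset.sum_eq_zero]
        intro r _
        rw [hY0 r, mul_zero]
      · intro j
        have := congrFun hwvm j
        rw [Pi.zero_apply] at this
        rw [← this]
        simp only [Matrix.vecMul, dotProduct, hA']
    · have : (fun k => ∑ r, w r * Y r k) ⬝ᵥ b = w ⬝ᵥ b' := by
        simp only [dotProduct, hb', Finset.sum_mul]
        rw [Finset.sum_comm]
        congr 1; funext r; rw [Finset.mul_sum]; congr 1; funext k; ring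
      rw [this]; exact hwb


lemma rat_feasible {ι κ : Type} [Fintype ι] [Fintype κ]
    (A : Matrix ι κ ℚ) (b : ι → ℚ) (x : κ → ℝ)
    (hx : ∀ i, (b i : ℝ) ≤ ∑ j, (A i j : ℝ) * x j) :
    ∃ q : κ → ℚ, ∀ i, b i ≤ ∑ j, A i j * q j := by
  classical
  by_contra hcon
  push_neg at hcon
  set e := Fintype.equivFin κ with he
  set A₀ : Matrix ι (Fin (Fintype.card κ)) ℚ := fun i j => A i (e.symm j) with hA₀
  have hnofeas : ¬ ∃ z : Fin (Fintype.card κ) → ℚ, b ≤ A₀.mulVec z := by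
    rintro ⟨z, hz⟩
    obtain ⟨i, hi⟩ := hcon (fun j => z (e j))
    apply absurd (hz i)
    push_neg
    calc (A₀.mulVec z) i = ∑ j' : Fin (Fintype.card κ), A i (e.symm j') * z j' := rfl
      _ = ∑ j : κ, A i (e.symm (e j)) * z (e j) := (Equiv.sum_comp e _).symm
      _ = ∑ j : κ, A i j * z (e j) := by simp
      _ < b i := hi
  obtain ⟨y, hynn, hyvm, hyb⟩ := gale_alternative _ A₀ b hnofeas
  -- cast to ℝ and derive a contradiction
  have hcol : ∀ j : κ, ∑ i, (y i : ℝ) * (A i j : ℝ) = 0 := by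
    intro j
    have h1 := congrFun hyvm (e j)
    have h2 : ∑ i, y i * A i j = 0 := by
      have : (A₀.vecMul y) (e j) = ∑ i, y i * A i j := by
        simp [hA₀, Matrix.vecMul, dotProduct]
      rw [← this, h1]; rfl
    calc ∑ i, (y i : ℝ) * (A i j : ℝ) = ((∑ i, y i * A i j : ℚ) : ℝ) := by push_cast; rfl
      _ = 0 := by rw [h2]; norm_num
  have hkey : (0:ℝ) < ∑ i, (y i : ℝ) * (b i : ℝ) := by
    have : ((y ⬝ᵥ b : ℚ) : ℝ) = ∑ i, (y i : ℝ) * (b i : ℝ) := by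
      simp [dotProduct]
    rw [← this]; exact_mod_cast hyb
  have hle : ∑ i, (y i : ℝ) * (b i : ℝ) ≤ ∑ i, (y i : ℝ) * (∑ j, (A i j : ℝ) * x j) := by
    apply Finset.sum_le_sum
    intro i _
    exact mul_le_mul_of_nonneg_left (hx i) (by exact_mod_cast hynn i)
  have hzero : ∑ i, (y i : ℝ) * (∑ j, (A i j : ℝ) * x j) = 0 := by
    calc ∑ i, (y i : ℝ) * (∑ j, (A i j : ℝ) * x j)
        = ∑ j, (∑ i, (y i : ℝ) * (A i j : ℝ)) * x j := by
          simp only [Finset.mul_sum, Finset.sum_mul]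
          rw [Finset.sum_comm]
          congr 1; funext j; congr 1; funext i; ring
      _ = 0 := by
          rw [Finset.sum_eq_zero]
          intro j _
          rw [hcol j, zero_mul]
  linarith


lemma dual_exists {n m : ℕ}
    (A : Matrix (Fin m) (Fin n) ℚ) (c : Fin n → ℚ) (bR : Fin m → ℝ) (x : Fin n → ℝ)
    (hfeas : ∀ i, bR i ≤ ∑ j, (A i j : ℝ) * x j)
    (hopt : ∀ x' : Fin n → ℝ, (∀ i, bR i ≤ ∑ j, (A i j : ℝ) * x' j) →
      ∑ j, (c j : ℝ) * x j ≤ ∑ j, (c j : ℝ) * x' j) :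
    ∃ y : Fin m → ℚ, 0 ≤ y ∧
      (∀ i, ∑ j, (A i j : ℝ) * x j ≠ bR i → y i = 0) ∧
      (∀ jj, ∑ i, y i * A i jj = c jj) := by
  classical
  set I : Fin m → Prop := fun i => ∑ j, (A i j : ℝ) * x j = bR i with hI
  set M : Matrix ((Fin m ⊕ Fin m) ⊕ (Fin n ⊕ Fin n)) (Fin m) ℚ :=
    Sum.elim
      (Sum.elim (fun i k => if k = i then 1 else 0)
                (fun i k => if I i then 0 else (if k = i then -1 else 0)))
      (Sum.elim (fun j k => A k j) (fun j k => -A k j)) with hM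
  set rhs : (Fin m ⊕ Fin m) ⊕ (Fin n ⊕ Fin n) → ℚ :=
    Sum.elim (Sum.elim (fun _ => 0) (fun _ => 0))
      (Sum.elim (fun j => c j) (fun j => -c j)) with hrhs
  have hsolv : ∃ q : Fin m → ℚ, rhs ≤ M.mulVec q := by
    by_contra hni
    obtain ⟨w, hwnn, hwvm, hwb⟩ := gale_alternative _ M rhs hni
    set d : Fin n → ℚ := fun j => w (Sum.inr (Sum.inr j)) - w (Sum.inr (Sum.inl j)) with hd
    have block : ∀ k : Fin m, (M.vecMul w) k =
        w (Sum.inl (Sum.inl k)) - (if I k then 0 else w (Sum.inl (Sum.inr k)))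
          - ∑ j, d j * A k j := by
      intro k
      simp only [Matrix.vecMul, dotProduct, Fintype.sum_sum_type, hM,
        Sum.elim_inl, Sum.elim_inr, mul_ite, mul_one, mul_zero, mul_neg,
        Finset.sum_ite_eq, Finset.mem_univ, if_true, hd]
      have hsecond : ∀ i : Fin m,
          (if I i then (0:ℚ) else if k = i then -w (Sum.inl (Sum.inr i)) else 0)
          = (if k = i then (if I i then 0 else -w (Sum.inl (Sum.inr i))) else 0) := by
        intro i
        by_cases h1 : I i <;> by_cases h2 : k = i <;> simp [h1, h2]
      rw [Finset.sum_congr rfl (fun i _ => hsecond i), Finset.sum_ite_eq]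
      simp only [Finset.mem_univ, if_true]
      rw [show (if I k then (0:ℚ) else -w (Sum.inl (Sum.inr k)))
            = -(if I k then (0:ℚ) else w (Sum.inl (Sum.inr k))) from by split <;> simp]
      simp only [sub_mul, Finset.sum_sub_distrib]
      rw [Finset.sum_neg_distrib]
      ring
    -- key rational facts about d
    have hdir : ∀ k : Fin m, I k → 0 ≤ ∑ j, d j * A k j := by
      intro k hk
      have h1 := congrFun hwvm k
      rw [Pi.zero_apply, block k] at h1
      rw [if_pos hk] at h1
      have h2 := hwnn (Sum.inl (Sum.inl k))
      rw [Pi.zero_apply] at h2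
      linarith
    have hcd : ∑ j, d j * c j < 0 := by
      have : w ⬝ᵥ rhs = - ∑ j, d j * c j := by
        simp only [dotProduct, Fintype.sum_sum_type, hrhs, Sum.elim_inl,
          Sum.elim_inr, mul_zero, Finset.sum_const_zero, hd, sub_mul, mul_neg,
          Finset.sum_sub_distrib, Finset.sum_neg_distrib]
        ring
      rw [this] at hwb
      linarith
    -- now derive a real contradiction using optimality
    set dR : Fin n → ℝ := fun j => (d j : ℝ) with hdR
    set g : Fin m → ℝ := fun k => ∑ j, (A k j : ℝ) * dR j with hg
    have hgI : ∀ k, I k → 0 ≤ g k := by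
      intro k hk
      have h1 := hdir k hk
      have : ((∑ j, d j * A k j : ℚ) : ℝ) = g k := by
        push_cast [hg, hdR]
        congr 1; funext j; ring
      rw [← this]
      exact_mod_cast h1
    set s : Fin m → ℝ := fun k => ∑ j, (A k j : ℝ) * x j - bR k with hs
    have hsnn : ∀ k, 0 ≤ s k := fun k => by simp [hs]; linarith [hfeas k]
    have hspos : ∀ k, ¬ I k → 0 < s k := by
      intro k hk
      rcases lt_or_eq_of_le (hsnn k) with h | h
      · exact h
      · exfalso; apply hk; rw [hI]; dsimp only; rw [hs] at h; dsimp only at h; linarith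
    set Fs : Finset (Fin m) := Finset.univ.filter (fun k => ¬ I k) with hFs
    set ε : ℝ := if h : Fs.Nonempty then Fs.inf' h (fun k => s k / (1 + |g k|)) else 1 with hε
    have hεpos : 0 < ε := by
      rw [hε]
      split
      · rename_i h
        rw [Finset.lt_inf'_iff]
        intro k hk
        rw [hFs, Finset.mem_filter] at hk
        have h1 := hspos k hk.2
        have h2 : (0:ℝ) < 1 + |g k| := by positivity
        positivity
      · norm_num
    have hεle : ∀ k ∈ Fs, ε ≤ s k / (1 + |g k|) := by
      intro k hk
      rw [hε, dif_pos ⟨k, hk⟩]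
      exact Finset.inf'_le _ hk
    set x' : Fin n → ℝ := fun j => x j + ε * dR j with hx'
    have hfeas' : ∀ k, bR k ≤ ∑ j, (A k j : ℝ) * x' j := by
      intro k
      have hsum : ∑ j, (A k j : ℝ) * x' j = (∑ j, (A k j : ℝ) * x j) + ε * g k := by
        simp only [hx', hg, Finset.mul_sum]
        rw [← Finset.sum_add_distrib]
        congr 1; funext j; ring
      rw [hsum]
      by_cases hk : I k
      · have h6 := mul_nonneg hεpos.le (hgI k hk)
        linarith [hfeas k]
      · have hkF : k ∈ Fs := by rw [hFs, Finset.mem_filter]; exact ⟨Finset.mem_univ k, hk⟩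
        have h1 := hεle k hkF
        have h2 : (0:ℝ) < 1 + |g k| := by positivity
        have hsk := hspos k hk
        have h3 : ε * |g k| < s k := by
          calc ε * |g k| ≤ (s k / (1 + |g k|)) * |g k| :=
                mul_le_mul_of_nonneg_right h1 (abs_nonneg _)
            _ < s k := by
                rw [div_mul_eq_mul_div, div_lt_iff₀ h2]
                nlinarith [abs_nonneg (g k)]
        have h4 : -(ε * |g k|) ≤ ε * g k := by
          have h6 := neg_abs_le (g k)
          nlinarith [hεpos.le]
        have h5 : s k = ∑ j, (A k j : ℝ) * x j - bR k := rfl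
        linarith
    have hobj : ∑ j, (c j : ℝ) * x' j < ∑ j, (c j : ℝ) * x j := by
      have hsum : ∑ j, (c j : ℝ) * x' j = (∑ j, (c j : ℝ) * x j) + ε * ∑ j, (d j : ℝ) * (c j : ℝ) := by
        simp only [hx', hdR, Finset.mul_sum]
        rw [← Finset.sum_add_distrib]
        congr 1; funext j; ring
      have hneg : (∑ j, (d j : ℝ) * (c j : ℝ)) < 0 := by
        have : ((∑ j, d j * c j : ℚ) : ℝ) = ∑ j, (d j : ℝ) * (c j : ℝ) := by push_cast; rfl
        rw [← this]; exact_mod_cast hcd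
      rw [hsum]
      nlinarith [hεpos]
    exact absurd (hopt x' hfeas') (by linarith)
  -- unpack the solution
  obtain ⟨q, hq⟩ := hsolv
  have hmv : ∀ r, rhs r ≤ (M.mulVec q) r := fun r => hq r
  have hqnn : ∀ i, 0 ≤ q i := by
    intro i
    have := hmv (Sum.inl (Sum.inl i))
    simpa [hM, hrhs, Matrix.mulVec, dotProduct, Finset.sum_ite_eq,
      ite_mul, one_mul, zero_mul] using this
  have hqzero : ∀ i, ¬ I i → q i = 0 := by
    intro i hi
    have := hmv (Sum.inl (Sum.inr i))
    simp only [hM, hrhs, Sum.elim_inl, Sum.elim_inr, Matrix.mulVec, dotProduct,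
      hi, if_false, ite_mul, neg_one_mul, zero_mul, Finset.sum_ite_eq,
      Finset.sum_ite_eq', neg_mul, Finset.mem_univ, if_true] at this
    have h2 := hqnn i
    linarith
  have hqcol : ∀ jj, ∑ i, q i * A i jj = c jj := by
    intro jj
    have h1 := hmv (Sum.inr (Sum.inl jj))
    have h2 := hmv (Sum.inr (Sum.inr jj))
    simp only [hM, hrhs, Sum.elim_inl, Sum.elim_inr, Matrix.mulVec, dotProduct,
      Pi.neg_apply, neg_mul, Finset.sum_neg_distrib] at h1 h2
    have e : ∑ i, q i * A i jj = ∑ i, A i jj * q i :=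
      Finset.sum_congr rfl (fun i _ => mul_comm _ _)
    have heq : ∑ i, A i jj * q i = c jj := le_antisymm (by linarith) h1
    rw [e, heq]
  exact ⟨q, fun i => hqnn i, fun i hi => hqzero i hi, hqcol⟩

end BilevelAux
/-- a feasible bilevel LP with rational data has a rational
feasible point. -/
theorem stmt_15 {n₁ n₂ m₁ m₂ : ℕ}
    (A₁₁ : Matrix (Fin m₁) (Fin n₁) ℚ) (A₁₂ : Matrix (Fin m₁) (Fin n₂) ℚ)
    (A₂₁ : Matrix (Fin m₂) (Fin n₁) ℚ) (A₂₂ : Matrix (Fin m₂) (Fin n₂) ℚ)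
    (b₁ : Fin m₁ → ℚ) (b₂ : Fin m₂ → ℚ) (c₂₂ : Fin n₂ → ℚ)
    (Feas : Set ((Fin n₁ → ℝ) × (Fin n₂ → ℝ)))
    (hFeas : Feas = {z |
      (fun i => (b₁ i : ℝ)) ≤
        (A₁₁.map ((↑·) : ℚ → ℝ)).mulVec z.1 + (A₁₂.map ((↑·) : ℚ → ℝ)).mulVec z.2 ∧
      (fun i => (b₂ i : ℝ)) ≤
        (A₂₁.map ((↑·) : ℚ → ℝ)).mulVec z.1 + (A₂₂.map ((↑·) : ℚ → ℝ)).mulVec z.2 ∧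
      ∀ x₂' : Fin n₂ → ℝ,
        (fun i => (b₂ i : ℝ)) ≤
          (A₂₁.map ((↑·) : ℚ → ℝ)).mulVec z.1 + (A₂₂.map ((↑·) : ℚ → ℝ)).mulVec x₂' →
        ∑ j, (c₂₂ j : ℝ) * z.2 j ≤ ∑ j, (c₂₂ j : ℝ) * x₂' j})
    (hne : Feas.Nonempty) :
    ∃ (q₁ : Fin n₁ → ℚ) (q₂ : Fin n₂ → ℚ),
      ((fun j => (q₁ j : ℝ)), (fun j => (q₂ j : ℝ))) ∈ Feas := by
  classical
  obtain ⟨⟨x₁, x₂⟩, hz⟩ := hne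
  rw [hFeas, Set.mem_setOf_eq] at hz
  obtain ⟨h1, h2, h3⟩ := hz
  -- sum forms of the constraints at the given feasible point
  have h1' : ∀ i, (b₁ i : ℝ) ≤ ∑ j, (A₁₁ i j : ℝ) * x₁ j + ∑ j, (A₁₂ i j : ℝ) * x₂ j := by
    intro i
    have := h1 i
    rwa [Pi.add_apply, mv_apply, mv_apply] at this
  have h2' : ∀ i, (b₂ i : ℝ) ≤ ∑ j, (A₂₁ i j : ℝ) * x₁ j + ∑ j, (A₂₂ i j : ℝ) * x₂ j := by
    intro i
    have := h2 i
    rwa [Pi.add_apply, mv_apply, mv_apply] at this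
  -- follower right-hand side (at x₁)
  set bR : Fin m₂ → ℝ := fun i => (b₂ i : ℝ) - ∑ j, (A₂₁ i j : ℝ) * x₁ j with hbR
  have hfeasR : ∀ i, bR i ≤ ∑ j, (A₂₂ i j : ℝ) * x₂ j := by
    intro i; rw [hbR]; dsimp only; linarith [h2' i]
  have hoptR : ∀ x' : Fin n₂ → ℝ, (∀ i, bR i ≤ ∑ j, (A₂₂ i j : ℝ) * x' j) →
      ∑ j, (c₂₂ j : ℝ) * x₂ j ≤ ∑ j, (c₂₂ j : ℝ) * x' j := by
    intro x' hx'
    apply h3 x'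
    intro i
    rw [Pi.add_apply, mv_apply, mv_apply]
    have := hx' i
    rw [hbR] at this; dsimp only at this; linarith
  -- get the rational dual multipliers
  obtain ⟨y, hynn, hysupp, hycol⟩ := dual_exists A₂₂ c₂₂ bR x₂ hfeasR hoptR
  -- the combined rational system
  set ι : Type := Fin m₁ ⊕ (Fin m₂ ⊕ (Fin m₂ ⊕ Fin m₂)) with hι
  set κ : Type := Fin n₁ ⊕ Fin n₂ with hκ
  set BigM : Matrix ι κ ℚ :=
    Sum.elim (fun i => Sum.elim (A₁₁ i) (A₁₂ i))
      (Sum.elim (fun i => Sum.elim (A₂₁ i) (A₂₂ i))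
        (Sum.elim (fun i => if y i = 0 then 0 else Sum.elim (A₂₁ i) (A₂₂ i))
          (fun i => if y i = 0 then 0 else -(Sum.elim (A₂₁ i) (A₂₂ i))))) with hBigM
  set Bigb : ι → ℚ :=
    Sum.elim b₁ (Sum.elim b₂
      (Sum.elim (fun i => if y i = 0 then 0 else b₂ i)
        (fun i => if y i = 0 then 0 else -b₂ i))) with hBigb
  set X : κ → ℝ := Sum.elim x₁ x₂ with hX
  have hXfeas : ∀ r : ι, (Bigb r : ℝ) ≤ ∑ jj, (BigM r jj : ℝ) * X jj := by
    have hsum : ∀ (u : Fin n₁ → ℚ) (v : Fin n₂ → ℚ),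
        ∑ jj : κ, ((Sum.elim u v jj : ℚ) : ℝ) * X jj
          = ∑ j, (u j : ℝ) * x₁ j + ∑ j, (v j : ℝ) * x₂ j := by
      intro u v
      rw [hX, Fintype.sum_sum_type]
      simp
    rintro (i | i | i | i)
    · simp only [hBigM, hBigb, Sum.elim_inl]
      rw [hsum (A₁₁ i) (A₁₂ i)]
      exact h1' i
    · simp only [hBigM, hBigb, Sum.elim_inl, Sum.elim_inr]
      rw [hsum (A₂₁ i) (A₂₂ i)]
      exact h2' i
    · simp only [hBigM, hBigb, Sum.elim_inl, Sum.elim_inr]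
      by_cases hy : y i = 0
      · simp [hy]
      · rw [if_neg hy, if_neg hy, hsum (A₂₁ i) (A₂₂ i)]
        have hact : ∑ j, (A₂₂ i j : ℝ) * x₂ j = bR i := by
          by_contra hne'
          exact hy (hysupp i hne')
        rw [hbR] at hact; dsimp only at hact
        linarith
    · simp only [hBigM, hBigb, Sum.elim_inl, Sum.elim_inr]
      by_cases hy : y i = 0
      · simp [hy]
      · rw [if_neg hy, if_neg hy]
        have hact : ∑ j, (A₂₂ i j : ℝ) * x₂ j = bR i := by
          by_contra hne'
          exact hy (hysupp i hne')
        rw [hbR] at hact; dsimp only at hact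
        have hneg : ∑ jj : κ, ((-(Sum.elim (A₂₁ i) (A₂₂ i)) : κ → ℚ) jj : ℝ) * X jj
            = -(∑ j, (A₂₁ i j : ℝ) * x₁ j + ∑ j, (A₂₂ i j : ℝ) * x₂ j) := by
          rw [← hsum (A₂₁ i) (A₂₂ i), ← Finset.sum_neg_distrib]
          apply Finset.sum_congr rfl
          intro jj _
          simp only [Pi.neg_apply]
          push_cast
          ring
        rw [hneg]
        push_cast
        linarith
  obtain ⟨qX, hqX⟩ := rat_feasible BigM Bigb X hXfeas
  set q₁ : Fin n₁ → ℚ := fun j => qX (Sum.inl j) with hq₁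
  set q₂ : Fin n₂ → ℚ := fun j => qX (Sum.inr j) with hq₂
  have hsumq : ∀ (u : Fin n₁ → ℚ) (v : Fin n₂ → ℚ),
      ∑ jj : κ, (Sum.elim u v jj) * qX jj = ∑ j, u j * q₁ j + ∑ j, v j * q₂ j := by
    intro u v
    rw [Fintype.sum_sum_type]
    simp [hq₁, hq₂]
  -- rational constraints
  have hr1 : ∀ i, b₁ i ≤ ∑ j, A₁₁ i j * q₁ j + ∑ j, A₁₂ i j * q₂ j := by
    intro i
    have := hqX (Sum.inl i)
    simp only [hBigM, hBigb, Sum.elim_inl] at this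
    rwa [hsumq] at this
  have hr2 : ∀ i, b₂ i ≤ ∑ j, A₂₁ i j * q₁ j + ∑ j, A₂₂ i j * q₂ j := by
    intro i
    have := hqX (Sum.inr (Sum.inl i))
    simp only [hBigM, hBigb, Sum.elim_inl, Sum.elim_inr] at this
    rwa [hsumq] at this
  have hr3 : ∀ i, y i ≠ 0 → ∑ j, A₂₁ i j * q₁ j + ∑ j, A₂₂ i j * q₂ j = b₂ i := by
    intro i hy
    have ha := hqX (Sum.inr (Sum.inr (Sum.inl i)))
    have hb := hqX (Sum.inr (Sum.inr (Sum.inr i)))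
    rw [hBigM, hBigb] at ha hb
    simp only [Sum.elim_inr, Sum.elim_inl, if_neg hy] at ha hb
    rw [hsumq] at ha
    have hb' : ∑ jj : κ, (-(Sum.elim (A₂₁ i) (A₂₂ i)) : κ → ℚ) jj * qX jj
        = -(∑ j, A₂₁ i j * q₁ j + ∑ j, A₂₂ i j * q₂ j) := by
      rw [← hsumq (A₂₁ i) (A₂₂ i), ← Finset.sum_neg_distrib]
      exact Finset.sum_congr rfl (fun jj _ => by simp)
    rw [hb'] at hb
    linarith
  -- final verification
  refine ⟨q₁, q₂, ?_⟩
  rw [hFeas, Set.mem_setOf_eq]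
  refine ⟨?_, ?_, ?_⟩
  · intro i
    rw [Pi.add_apply, mv_apply, mv_apply]
    have := hr1 i
    have hc : ((∑ j, A₁₁ i j * q₁ j + ∑ j, A₁₂ i j * q₂ j : ℚ) : ℝ)
        = ∑ j, (A₁₁ i j : ℝ) * (q₁ j : ℝ) + ∑ j, (A₁₂ i j : ℝ) * (q₂ j : ℝ) := by
      push_cast; rfl
    calc ((b₁ i : ℝ)) ≤ ((∑ j, A₁₁ i j * q₁ j + ∑ j, A₁₂ i j * q₂ j : ℚ) : ℝ) := by
          exact_mod_cast this
      _ = _ := by rw [hc]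
  · intro i
    rw [Pi.add_apply, mv_apply, mv_apply]
    have := hr2 i
    have hc : ((∑ j, A₂₁ i j * q₁ j + ∑ j, A₂₂ i j * q₂ j : ℚ) : ℝ)
        = ∑ j, (A₂₁ i j : ℝ) * (q₁ j : ℝ) + ∑ j, (A₂₂ i j : ℝ) * (q₂ j : ℝ) := by
      push_cast; rfl
    calc ((b₂ i : ℝ)) ≤ ((∑ j, A₂₁ i j * q₁ j + ∑ j, A₂₂ i j * q₂ j : ℚ) : ℝ) := by
          exact_mod_cast this
      _ = _ := by rw [hc]
  · intro x₂' hx'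
    have hx'' : ∀ i, (b₂ i : ℝ) - ∑ j, (A₂₁ i j : ℝ) * (q₁ j : ℝ)
        ≤ ∑ j, (A₂₂ i j : ℝ) * x₂' j := by
      intro i
      have := hx' i
      rw [Pi.add_apply, mv_apply, mv_apply] at this
      linarith
    -- t i = the follower rhs at q₁
    set t : Fin m₂ → ℝ := fun i => (b₂ i : ℝ) - ∑ j, (A₂₁ i j : ℝ) * (q₁ j : ℝ) with ht
    have hyR : ∀ i, (0:ℝ) ≤ (y i : ℝ) := fun i => by exact_mod_cast hynn i
    have hcolR : ∀ j, (c₂₂ j : ℝ) = ∑ i, (y i : ℝ) * (A₂₂ i j : ℝ) := by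
      intro j
      have h2 : ((∑ i, y i * A₂₂ i j : ℚ) : ℝ) = ∑ i, (y i : ℝ) * (A₂₂ i j : ℝ) := by
        push_cast; rfl
      rw [← h2, hycol j]
    have hswap : ∀ v : Fin n₂ → ℝ, ∑ j, (c₂₂ j : ℝ) * v j
        = ∑ i, (y i : ℝ) * ∑ j, (A₂₂ i j : ℝ) * v j := by
      intro v
      calc ∑ j, (c₂₂ j : ℝ) * v j = ∑ j, (∑ i, (y i : ℝ) * (A₂₂ i j : ℝ)) * v j := by
            exact Finset.sum_congr rfl (fun j _ => by rw [← hcolR j])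
        _ = ∑ i, (y i : ℝ) * ∑ j, (A₂₂ i j : ℝ) * v j := by
            simp only [Finset.sum_mul, Finset.mul_sum]
            rw [Finset.sum_comm]
            exact Finset.sum_congr rfl (fun i _ => Finset.sum_congr rfl (fun j _ => by ring))
    have hlow : ∑ i, (y i : ℝ) * t i ≤ ∑ j, (c₂₂ j : ℝ) * x₂' j := by
      rw [hswap x₂']
      exact Finset.sum_le_sum (fun i _ => mul_le_mul_of_nonneg_left (hx'' i) (hyR i))
    have heqq : ∑ j, (c₂₂ j : ℝ) * (q₂ j : ℝ) = ∑ i, (y i : ℝ) * t i := by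
      rw [hswap (fun j => (q₂ j : ℝ))]
      apply Finset.sum_congr rfl
      intro i _
      by_cases hy : y i = 0
      · rw [hy]; norm_num
      · have := hr3 i hy
        have hcast : ∑ j, (A₂₂ i j : ℝ) * (q₂ j : ℝ)
            = (b₂ i : ℝ) - ∑ j, (A₂₁ i j : ℝ) * (q₁ j : ℝ) := by
          have h4 : ((∑ j, A₂₂ i j * q₂ j : ℚ) : ℝ) = ∑ j, (A₂₂ i j : ℝ) * (q₂ j : ℝ) := by
            push_cast; rfl
          have h5 : ((∑ j, A₂₁ i j * q₁ j : ℚ) : ℝ) = ∑ j, (A₂₁ i j : ℝ) * (q₁ j : ℝ) := by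
            push_cast; rfl
          rw [← h4, ← h5]
          have h6 : (∑ j, A₂₂ i j * q₂ j : ℚ) = b₂ i - ∑ j, A₂₁ i j * q₁ j := by linarith
          rw [h6]; push_cast; ring
        rw [hcast, ht]
    rw [heqq]
    exact hlow
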